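/- Let H ∈ ℝ^{n×n} be symmetric positive definite and let s, y ∈ ℝⁿ with sᵀy > 0, sᵀs/(sᵀy) ≤ 1/μ₂ and yᵀy/(sᵀy) ≤ 1/μ₃ for positive constants μ₂, μ₃. Define ρ = 1/(sᵀy) and the inverse-BFGS update H⁺ = (I − ρ s yᵀ) H (I − ρ y sᵀ) + ρ s sᵀ. Then ‖H⁺‖ ≤ (1 + 1/√(μ₂μ₃))² ‖H‖ + 1/μ₂, where ‖·‖ is the spectral norm. -/

import Mathlib

open Matrix
open scoped Matrix.Norms.L2Operator

noncomputable def euc {n : ℕ} (v : Fin n → ℝ) : EuclideanSpace ℝ (Fin n) :=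
  (EuclideanSpace.equiv (Fin n) ℝ).symm v

lemma euc_sq {n : ℕ} (v : Fin n → ℝ) : ‖euc v‖ ^ 2 = v ⬝ᵥ v := by
  rw [← real_inner_self_eq_norm_sq]
  simp [euc, PiLp.inner_apply, dotProduct, mul_comm]
  rw [EuclideanSpace.norm_eq, Real.sq_sqrt (by positivity)]
  simp [Real.norm_eq_abs, sq_abs, sq]

lemma vmv_mulVec {n : ℕ} (s y x : Fin n → ℝ) :
    vecMulVec s y *ᵥ x = (y ⬝ᵥ x) • s := by
  funext i
  simp [mulVec, vecMulVec_apply, dotProduct, Finset.mul_sum, mul_assoc, mul_comm, mul_left_comm]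

lemma vmv_norm_le {n : ℕ} (s y : Fin n → ℝ) :
    ‖vecMulVec s y‖ ≤ ‖euc s‖ * ‖euc y‖ := by
  rw [Matrix.l2_opNorm_def]
  apply ContinuousLinearMap.opNorm_le_bound _ (by positivity)
  intro x
  have h1 : (LinearEquiv.trans toEuclideanLin LinearMap.toContinuousLinearMap
      (vecMulVec s y)) x = euc ((y ⬝ᵥ x) • s) := by
    simp only [LinearEquiv.trans_apply, LinearMap.coe_toContinuousLinearMap',
      toEuclideanLin_apply, vmv_mulVec]
    rfl
  rw [h1]
  have : euc ((y ⬝ᵥ x) • s) = (y ⬝ᵥ x) • euc s := rfl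
  rw [this, norm_smul]
  have hyx : y ⬝ᵥ (x : Fin n → ℝ) = inner ℝ (euc y) x := by
    simp [euc, PiLp.inner_apply, dotProduct, mul_comm]
  calc ‖y ⬝ᵥ (x : Fin n → ℝ)‖ * ‖euc s‖ ≤ (‖euc y‖ * ‖x‖) * ‖euc s‖ := by
        apply mul_le_mul_of_nonneg_right _ (norm_nonneg _)
        rw [hyx]
        exact norm_inner_le_norm _ _
    _ = ‖euc s‖ * ‖euc y‖ * ‖x‖ := by ring

lemma mat_norm_one_le {n : ℕ} : ‖(1 : Matrix (Fin n) (Fin n) ℝ)‖ ≤ 1 := by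
  rw [Matrix.cstar_norm_def, _root_.map_one, ContinuousLinearMap.one_def]
  exact ContinuousLinearMap.norm_id_le

/-- Inverse-BFGS update norm bound: ‖H⁺‖ ≤ (1 + 1/√(μ₂μ₃))² ‖H‖ + 1/μ₂ (spectral norm). -/
theorem bfgs_H_update_norm_bound {n : ℕ} (H : Matrix (Fin n) (Fin n) ℝ)
    (hH : H.PosDef) (s y : Fin n → ℝ) (hsy : 0 < s ⬝ᵥ y)
    (μ₂ μ₃ : ℝ) (hμ₂ : 0 < μ₂) (hμ₃ : 0 < μ₃)
    (hss : (s ⬝ᵥ s) / (s ⬝ᵥ y) ≤ 1 / μ₂) (hyy : (y ⬝ᵥ y) / (s ⬝ᵥ y) ≤ 1 / μ₃)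
    (ρ : ℝ) (hρ : ρ = (s ⬝ᵥ y)⁻¹)
    (Hp : Matrix (Fin n) (Fin n) ℝ)
    (hHp : Hp = (1 - ρ • vecMulVec s y) * H * (1 - ρ • vecMulVec y s)
      + ρ • vecMulVec s s) :
    ‖Hp‖ ≤ (1 + 1 / Real.sqrt (μ₂ * μ₃)) ^ 2 * ‖H‖ + 1 / μ₂ := by
  have hρ0 : 0 < ρ := by rw [hρ]; exact inv_pos.mpr hsy
  have hs2 : ‖euc s‖ ^ 2 = s ⬝ᵥ s := euc_sq s
  have hy2 : ‖euc y‖ ^ 2 = y ⬝ᵥ y := euc_sq y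
  have hsle : s ⬝ᵥ s ≤ (s ⬝ᵥ y) / μ₂ := by
    rw [le_div_iff₀ hμ₂]; rw [div_le_div_iff₀ hsy hμ₂] at hss; linarith
  have hyle : y ⬝ᵥ y ≤ (s ⬝ᵥ y) / μ₃ := by
    rw [le_div_iff₀ hμ₃]; rw [div_le_div_iff₀ hsy hμ₃] at hyy; linarith
  have hμμ : 0 < μ₂ * μ₃ := mul_pos hμ₂ hμ₃
  have hsqrt : 0 < Real.sqrt (μ₂ * μ₃) := Real.sqrt_pos.mpr hμμ
  set c : ℝ := 1 + 1 / Real.sqrt (μ₂ * μ₃) with hc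
  have hc0 : 0 < c := by positivity
  -- key scalar bound
  have hkey : ρ * (‖euc s‖ * ‖euc y‖) ≤ 1 / Real.sqrt (μ₂ * μ₃) := by
    have hnn : 0 ≤ ρ * (‖euc s‖ * ‖euc y‖) := by positivity
    have hsq : (ρ * (‖euc s‖ * ‖euc y‖)) ^ 2 ≤ 1 / (μ₂ * μ₃) := by
      have h1 : (ρ * (‖euc s‖ * ‖euc y‖)) ^ 2 = ρ ^ 2 * ((s ⬝ᵥ s) * (y ⬝ᵥ y)) := by
        rw [← hs2, ← hy2]; ring
      have h2 : (s ⬝ᵥ s) * (y ⬝ᵥ y) ≤ (s ⬝ᵥ y) ^ 2 / (μ₂ * μ₃) := by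
        have hs0 : 0 ≤ s ⬝ᵥ s := by nlinarith [hs2, sq_nonneg (‖euc s‖)]
        calc (s ⬝ᵥ s) * (y ⬝ᵥ y) ≤ ((s ⬝ᵥ y) / μ₂) * ((s ⬝ᵥ y) / μ₃) := by
              apply mul_le_mul hsle hyle _ (by positivity)
              · nlinarith [hy2, sq_nonneg (‖euc y‖)]
          _ = (s ⬝ᵥ y) ^ 2 / (μ₂ * μ₃) := by ring
      have hρsy : ρ * (s ⬝ᵥ y) = 1 := by rw [hρ]; field_simp
      calc (ρ * (‖euc s‖ * ‖euc y‖)) ^ 2 = ρ ^ 2 * ((s ⬝ᵥ s) * (y ⬝ᵥ y)) := h1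
        _ ≤ ρ ^ 2 * ((s ⬝ᵥ y) ^ 2 / (μ₂ * μ₃)) := by
            apply mul_le_mul_of_nonneg_left h2 (by positivity)
        _ = (ρ * (s ⬝ᵥ y)) ^ 2 / (μ₂ * μ₃) := by ring
        _ = 1 / (μ₂ * μ₃) := by rw [hρsy]; ring
    calc ρ * (‖euc s‖ * ‖euc y‖) = Real.sqrt ((ρ * (‖euc s‖ * ‖euc y‖)) ^ 2) :=
          (Real.sqrt_sq hnn).symm
      _ ≤ Real.sqrt (1 / (μ₂ * μ₃)) := Real.sqrt_le_sqrt hsq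
      _ = 1 / Real.sqrt (μ₂ * μ₃) := by
          rw [one_div, Real.sqrt_inv, one_div]
  have hA : ‖(1 : Matrix (Fin n) (Fin n) ℝ) - ρ • vecMulVec s y‖ ≤ c := by
    calc ‖(1 : Matrix (Fin n) (Fin n) ℝ) - ρ • vecMulVec s y‖
        ≤ ‖(1 : Matrix (Fin n) (Fin n) ℝ)‖ + ‖ρ • vecMulVec s y‖ := norm_sub_le _ _
      _ ≤ 1 + ρ * (‖euc s‖ * ‖euc y‖) := by
          apply add_le_add mat_norm_one_le
          rw [norm_smul, Real.norm_eq_abs, abs_of_pos hρ0]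
          exact mul_le_mul_of_nonneg_left (vmv_norm_le s y) hρ0.le
      _ ≤ c := by rw [hc]; linarith [hkey]
  have hB : ‖(1 : Matrix (Fin n) (Fin n) ℝ) - ρ • vecMulVec y s‖ ≤ c := by
    calc ‖(1 : Matrix (Fin n) (Fin n) ℝ) - ρ • vecMulVec y s‖
        ≤ ‖(1 : Matrix (Fin n) (Fin n) ℝ)‖ + ‖ρ • vecMulVec y s‖ := norm_sub_le _ _
      _ ≤ 1 + ρ * (‖euc s‖ * ‖euc y‖) := by
          apply add_le_add mat_norm_one_le
          rw [norm_smul, Real.norm_eq_abs, abs_of_pos hρ0]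
          refine mul_le_mul_of_nonneg_left ?_ hρ0.le
          calc ‖vecMulVec y s‖ ≤ ‖euc y‖ * ‖euc s‖ := vmv_norm_le y s
            _ = ‖euc s‖ * ‖euc y‖ := mul_comm _ _
      _ ≤ c := by rw [hc]; linarith [hkey]
  have hC : ‖ρ • vecMulVec s s‖ ≤ 1 / μ₂ := by
    rw [norm_smul, Real.norm_eq_abs, abs_of_pos hρ0]
    calc ρ * ‖vecMulVec s s‖ ≤ ρ * (‖euc s‖ * ‖euc s‖) :=
          mul_le_mul_of_nonneg_left (vmv_norm_le s s) hρ0.le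
      _ = ρ * (s ⬝ᵥ s) := by rw [← hs2]; ring
      _ = (s ⬝ᵥ s) / (s ⬝ᵥ y) := by rw [hρ]; ring
      _ ≤ 1 / μ₂ := hss
  rw [hHp]
  calc ‖(1 - ρ • vecMulVec s y) * H * (1 - ρ • vecMulVec y s) + ρ • vecMulVec s s‖
      ≤ ‖(1 - ρ • vecMulVec s y) * H * (1 - ρ • vecMulVec y s)‖ + ‖ρ • vecMulVec s s‖ :=
        norm_add_le _ _
    _ ≤ ‖(1 - ρ • vecMulVec s y) * H‖ * ‖(1 - ρ • vecMulVec y s)‖ + 1 / μ₂ :=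
        add_le_add (norm_mul_le _ _) hC
    _ ≤ (‖(1 - ρ • vecMulVec s y)‖ * ‖H‖) * ‖(1 - ρ • vecMulVec y s)‖ + 1 / μ₂ := by
        apply add_le_add_left
        exact mul_le_mul_of_nonneg_right (norm_mul_le _ _) (norm_nonneg _)
    _ ≤ (c * ‖H‖) * c + 1 / μ₂ := by
        apply add_le_add_left
        apply mul_le_mul _ hB (norm_nonneg _) (by positivity)
        exact mul_le_mul_of_nonneg_right hA (norm_nonneg _)
    _ = c ^ 2 * ‖H‖ + 1 / μ₂ := by ring
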